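/- Let M be a symmetric real n×n matrix with zero diagonal and positive off-diagonal entries, and let v ∈ ℝ^n be a vector with v^T𝟙 = 1. Then M is a Euclidean distance matrix (i.e., M_{ij} = ‖x_i - x_j‖² for some points x_i) if and only if F := (I - 𝟙v^T) M (I - v𝟙^T) is negative semidefinite. -/

import Mathlib

open Matrix

private lemma psd_smul' {n : ℕ} {M : Matrix (Fin n) (Fin n) ℝ} (h : M.PosSemidef)
    {c : ℝ} (hc : 0 ≤ c) : (c • M).PosSemidef := by
  constructor
  · unfold Matrix.IsHermitian
    rw [conjTranspose_smul, star_trivial, h.1.eq]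
  · exact (h.smul hc).2

private lemma sq_dist_sum {m : ℕ} (x y : EuclideanSpace ℝ (Fin m)) :
    dist x y ^ 2 = ∑ k, (x k - y k) ^ 2 := by
  rw [EuclideanSpace.dist_eq, Real.sq_sqrt (by positivity)]
  refine Finset.sum_congr rfl fun k _ => by rw [Real.dist_eq, sq_abs]

theorem stmt_3 (n : ℕ) (M : Matrix (Fin n) (Fin n) ℝ)
    (hsymm : M.IsSymm)
    (hdiag : ∀ i, M i i = 0)
    (hoff : ∀ i j, i ≠ j → 0 < M i j)
    (v : Fin n → ℝ) (hv : ∑ i, v i = 1)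
    (F : Matrix (Fin n) (Fin n) ℝ)
    (hF : F = (1 - Matrix.vecMulVec (fun _ => (1 : ℝ)) v) * M *
              (1 - Matrix.vecMulVec v (fun _ => (1 : ℝ)))) :
    (∃ (m : ℕ) (x : Fin n → EuclideanSpace ℝ (Fin m)),
        ∀ i j, M i j = dist (x i) (x j) ^ 2) ↔ (-F).PosSemidef := by
  have hMsymm : ∀ i j, M i j = M j i := fun i j => by
    conv_lhs => rw [← hsymm]
    rfl
  set P : Matrix (Fin n) (Fin n) ℝ := 1 - Matrix.vecMulVec (fun _ => (1 : ℝ)) v with hP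
  set Q : Matrix (Fin n) (Fin n) ℝ := 1 - Matrix.vecMulVec v (fun _ => (1 : ℝ)) with hQ
  have hQP : Q = Pᵀ := by
    ext i j
    by_cases h : i = j <;>
      simp [hP, hQ, transpose_apply, Matrix.sub_apply, vecMulVec_apply, one_apply, h, eq_comm]
  constructor
  · rintro ⟨m, x, hx⟩
    set A : Matrix (Fin m) (Fin n) ℝ := Matrix.of fun k i => x i k with hA
    set G : Matrix (Fin n) (Fin n) ℝ := Aᵀ * A with hG
    have hGij : ∀ i j, G i j = ∑ k, x i k * x j k := by
      intro i j
      simp [hG, mul_apply, hA]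
    have hdist : ∀ i j, M i j = G i i + G j j - 2 * G i j := by
      intro i j
      rw [hx i j, sq_dist_sum, hGij, hGij, hGij]
      rw [show (∑ k, (x i k - x j k) ^ 2)
          = ∑ k, (x i k * x i k + x j k * x j k - 2 * (x i k * x j k)) from
        Finset.sum_congr rfl fun k _ => by ring]
      rw [Finset.sum_sub_distrib, Finset.sum_add_distrib, ← Finset.mul_sum]
    set s : Fin n → ℝ := fun i => G i i with hs
    have hM : M = Matrix.vecMulVec s (fun _ => (1:ℝ))
        + Matrix.vecMulVec (fun _ => (1:ℝ)) s - (2:ℝ) • G := by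
      ext i j
      simp only [Matrix.sub_apply, Matrix.add_apply, vecMulVec_apply, Matrix.smul_apply, smul_eq_mul, hdist i j]
      ring
    have h1 : P * Matrix.vecMulVec (fun _ => (1:ℝ)) s = 0 := by
      ext i j
      simp only [mul_apply, hP, Matrix.sub_apply, vecMulVec_apply, one_mul, sub_mul, Matrix.zero_apply]
      rw [Finset.sum_sub_distrib]
      simp [one_apply, ← Finset.sum_mul, hv]
    have h2 : Matrix.vecMulVec s (fun _ => (1:ℝ)) * Q = 0 := by
      ext i j
      simp only [mul_apply, hQ, Matrix.sub_apply, vecMulVec_apply, mul_one, mul_sub, Matrix.zero_apply]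
      rw [Finset.sum_sub_distrib]
      simp [one_apply, ← Finset.mul_sum, hv]
    have hFeq : -F = (2:ℝ) • ((A * Pᵀ)ᴴ * (A * Pᵀ)) := by
      have hct : (A * Pᵀ)ᴴ = P * Aᵀ := by
        rw [conjTranspose_eq_transpose_of_trivial, transpose_mul, transpose_transpose]
      have key : P * ((Matrix.vecMulVec s fun _ => (1:ℝ)) + Matrix.vecMulVec (fun _ => (1:ℝ)) s
          - (2:ℝ) • G) * Q = -((2:ℝ) • (P * Aᵀ * (A * Pᵀ))) := by
        simp only [Matrix.mul_sub, Matrix.mul_add, Matrix.sub_mul, Matrix.add_mul,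
          Matrix.mul_smul, Matrix.smul_mul]
        rw [Matrix.mul_assoc P (Matrix.vecMulVec s fun _ => (1:ℝ)) Q, h2, Matrix.mul_zero,
          h1, Matrix.zero_mul]
        simp [hG, hQP, Matrix.mul_assoc]
      rw [hct, hF, hM, key, neg_neg]
    rw [hFeq]
    exact psd_smul' (posSemidef_conjTranspose_mul_self _) (by norm_num)
  · intro h
    set K : Matrix (Fin n) (Fin n) ℝ := (2⁻¹ : ℝ) • (-F) with hK
    have hKpsd : K.PosSemidef := psd_smul' h (by norm_num)
    open scoped MatrixOrder in obtain ⟨B, hB⟩ := CStarAlgebra.nonneg_iff_eq_star_mul_self.mp hKpsd.nonneg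
    refine ⟨n, fun i => (WithLp.equiv 2 (Fin n → ℝ)).symm (fun k => B k i), fun i j => ?_⟩
    have hKij : ∀ i j, K i j = ∑ k, B k i * B k j := by
      intro i j
      rw [hB]
      simp [mul_apply, conjTranspose_apply]
    set a : Fin n → ℝ := fun i => ∑ k, v k * M k i with ha
    set c : ℝ := ∑ k, v k * a k with hc
    have hPM : ∀ i l, (P * M) i l = M i l - a l := by
      intro i l
      simp only [mul_apply, hP, Matrix.sub_apply, vecMulVec_apply, one_mul, sub_mul]
      rw [Finset.sum_sub_distrib]
      simp [one_apply, ha]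
    have hFij : ∀ i j, F i j = M i j - a i - a j + c := by
      intro i j
      rw [hF, Matrix.mul_apply]
      rw [show (∑ l, (P * M) i l * Q l j)
          = ∑ l, (M i l - a l) * ((if l = j then (1:ℝ) else 0) - v l) from
        Finset.sum_congr rfl fun l _ => by
          rw [hPM]
          simp [hQ, Matrix.sub_apply, vecMulVec_apply, one_apply]]
      have expand : ∀ l, (M i l - a l) * ((if l = j then (1:ℝ) else 0) - v l)
          = (if l = j then M i l - a l else 0) - (v l * M i l - v l * a l) := by
        intro l
        by_cases h : l = j <;> simp [h] <;> ring
      rw [Finset.sum_congr rfl fun l _ => expand l, Finset.sum_sub_distrib,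
        Finset.sum_ite_eq' Finset.univ j (fun l => M i l - a l), Finset.sum_sub_distrib]
      have hb : ∑ l, v l * M i l = a i := by
        rw [ha]
        exact Finset.sum_congr rfl fun l _ => by rw [hMsymm i l]
      simp [hb, ← hc]
      ring
    have e1 : dist ((WithLp.equiv 2 (Fin n → ℝ)).symm (fun k => B k i))
        ((WithLp.equiv 2 (Fin n → ℝ)).symm (fun k => B k j)) ^ 2
        = K i i + K j j - 2 * K i j := by
      rw [sq_dist_sum]
      simp only [WithLp.equiv_symm_apply, WithLp.ofLp_toLp]
      rw [hKij, hKij, hKij]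
      rw [show (∑ k, (B k i - B k j) ^ 2)
          = ∑ k, (B k i * B k i + B k j * B k j - 2 * (B k i * B k j)) from
        Finset.sum_congr rfl fun k _ => by ring]
      rw [Finset.sum_sub_distrib, Finset.sum_add_distrib, ← Finset.mul_sum]
    rw [e1]
    have kval : ∀ i j, K i j = -(M i j - a i - a j + c) / 2 := by
      intro i j
      rw [hK]
      simp [hFij i j]
      ring
    rw [kval, kval, kval, hdiag i, hdiag j]
    ring
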